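/- Let p ≡ 1 (mod 4) be a prime and let s be the Legendre sequence of period p (s_i = 1 iff i is a nonzero quadratic residue mod p). Let A be the circulant matrix of s. Then det(A) = ±((p-1)/2)·((p-1)/4)^{(p-1)/2}. -/

import Mathlib

open Matrix Finset

section aux
variable (p : ℕ) [Fact p.Prime]

private lemma char2 (hp4 : p % 4 = 1) : ringChar (ZMod p) ≠ 2 := by
  rw [ZMod.ringChar_zmod_n]
  omega

private lemma corr_aux (hp4 : p % 4 = 1) {e : ZMod p} (he : e ≠ 0) :
    ∑ x : ZMod p, quadraticChar (ZMod p) x * quadraticChar (ZMod p) (x + e) = -1 := by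
  set χ := quadraticChar (ZMod p) with hχ
  have h0 : χ 0 = 0 := by
    simp [hχ]
  rw [← Finset.add_sum_erase _ _ (Finset.mem_univ (0 : ZMod p)), h0, zero_mul, zero_add]
  have step1 : ∀ x ∈ Finset.univ.erase (0 : ZMod p),
      χ x * χ (x + e) = χ (1 + e * x⁻¹) := by
    intro x hx
    have hx0 : x ≠ 0 := Finset.ne_of_mem_erase hx
    have : x + e = x * (1 + e * x⁻¹) := by field_simp
    rw [this, _root_.map_mul, ← mul_assoc, ← pow_two, quadraticChar_sq_one hx0, one_mul]
  rw [Finset.sum_congr rfl step1]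
  have step2 : ∑ x ∈ Finset.univ.erase (0 : ZMod p), χ (1 + e * x⁻¹)
      = ∑ y ∈ Finset.univ.erase (1 : ZMod p), χ y := by
    apply Finset.sum_nbij' (i := fun x => 1 + e * x⁻¹) (j := fun y => e * (y - 1)⁻¹)
    · intro x hx
      have hx0 : x ≠ 0 := Finset.ne_of_mem_erase hx
      simp only [Finset.mem_erase, Finset.mem_univ, and_true]
      intro h
      have : e * x⁻¹ = 0 := by linear_combination h
      simp [he, hx0] at this
    · intro y hy
      have hy1 : y ≠ 1 := Finset.ne_of_mem_erase hy
      simp only [Finset.mem_erase, Finset.mem_univ, and_true]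
      have : y - 1 ≠ 0 := sub_ne_zero.mpr hy1
      simp [he, this]
    · intro x hx
      have hx0 : x ≠ 0 := Finset.ne_of_mem_erase hx
      field_simp
      simp [he]
    · intro y hy
      have hy1 : y ≠ 1 := Finset.ne_of_mem_erase hy
      have : y - 1 ≠ 0 := sub_ne_zero.mpr hy1
      field_simp
      ring
    · intro x hx; rfl
  have hsum : ∑ x : ZMod p, χ x = 0 := quadraticChar_sum_zero (char2 p hp4)
  have h1 : χ 1 = 1 := map_one χ
  have := Finset.add_sum_erase Finset.univ (fun y => χ y) (Finset.mem_univ (1 : ZMod p))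
  rw [step2]
  omega

end aux

section aux2
variable (p : ℕ) [Fact p.Prime]

private lemma chi_neg_one (hp4 : p % 4 = 1) : quadraticChar (ZMod p) (-1) = 1 := by
  have h2 : p ≠ 2 := by omega
  have hcard : Fintype.card (ZMod p) = p := ZMod.card p
  have hsq : IsSquare (-1 : ZMod p) := by
    rw [FiniteField.isSquare_neg_one_iff, hcard, hp4]
    omega
  have hne : (-1 : ZMod p) ≠ 0 := by
    simp
  exact (quadraticChar_one_iff_isSquare hne).mpr hsq

private lemma sum_chi_self : ∑ x : ZMod p, quadraticChar (ZMod p) x * quadraticChar (ZMod p) x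
    = (p : ℤ) - 1 := by
  set χ := quadraticChar (ZMod p) with hχ
  have h0 : χ 0 = 0 := by simp [hχ]
  rw [← Finset.add_sum_erase _ _ (Finset.mem_univ (0 : ZMod p)), h0, zero_mul, zero_add]
  have : ∀ x ∈ Finset.univ.erase (0 : ZMod p), χ x * χ x = 1 := by
    intro x hx
    have := quadraticChar_sq_one (Finset.ne_of_mem_erase hx)
    rwa [pow_two] at this
  rw [Finset.sum_congr rfl this, Finset.sum_const, Finset.card_erase_of_mem (Finset.mem_univ _),
    Finset.card_univ, ZMod.card]
  have hp1 : 1 ≤ p := (Fact.out : p.Prime).one_le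
  simp [nsmul_eq_mul]
  omega

private lemma sum_chi_shift (hp4 : p % 4 = 1) (d : ZMod p) :
    ∑ k : ZMod p, quadraticChar (ZMod p) (d - k) * quadraticChar (ZMod p) k
    = if d = 0 then (p : ℤ) - 1 else -1 := by
  set χ := quadraticChar (ZMod p) with hχ
  have hneg : ∀ x : ZMod p, χ (-x) = χ x := by
    intro x
    have : (-x : ZMod p) = -1 * x := by ring
    rw [this, _root_.map_mul, chi_neg_one p hp4, one_mul]
  have key : ∀ k : ZMod p, χ (d - k) * χ k = χ (k - d) * χ k := by
    intro k
    rw [← hneg (d - k)]; ring_nf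
  rw [Finset.sum_congr rfl (fun k _ => key k)]
  have reind : ∑ k : ZMod p, χ (k - d) * χ k = ∑ x : ZMod p, χ x * χ (x + d) := by
    refine Fintype.sum_equiv (Equiv.subRight d) _ _ ?_
    intro k
    simp [Equiv.subRight_apply, sub_add_cancel]
  rw [reind]
  by_cases hd : d = 0
  · subst hd
    simp only [add_zero, if_true]
    exact sum_chi_self p
  · rw [if_neg hd]
    exact corr_aux p hp4 hd

end aux2

section aux3
variable {p : ℕ} [Fact p.Prime]
  {s : ZMod p → ℤ} (hbin : ∀ i, s i = 0 ∨ s i = 1)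
  (hs : ∀ i : ZMod p, s i = 1 ↔ i ≠ 0 ∧ IsSquare i)
private def cc (p : ℕ) [Fact p.Prime] (x : ZMod p) : ℚ := (quadraticChar (ZMod p) x : ℚ)

private lemma cc_zero : cc p 0 = 0 := by simp [cc]

private lemma sum_cc (hp4 : p % 4 = 1) : ∑ x : ZMod p, cc p x = 0 := by
  have h2 : ringChar (ZMod p) ≠ 2 := char2 p hp4
  have := quadraticChar_sum_zero h2
  unfold cc
  exact_mod_cast this

private lemma sum_cc_shift (hp4 : p % 4 = 1) (d : ZMod p) : ∑ k : ZMod p, cc p (d - k) = 0 := by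
  rw [← sum_cc hp4]
  exact Fintype.sum_equiv (Equiv.subLeft d) _ _ (fun k => rfl)

private lemma sum_cc_mul (hp4 : p % 4 = 1) (d : ZMod p) :
    ∑ k : ZMod p, cc p (d - k) * cc p k = if d = 0 then (p : ℚ) - 1 else -1 := by
  have := sum_chi_shift p hp4 d
  unfold cc
  by_cases hd : d = 0
  · rw [if_pos hd]
    rw [if_pos hd] at this
    exact_mod_cast this
  · rw [if_neg hd]
    rw [if_neg hd] at this
    exact_mod_cast this

private lemma sum_g (hp4 : p % 4 = 1) (d : ZMod p) :
    ∑ k : ZMod p, (1 + cc p (d - k)) * (1 + cc p k)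
    = (p : ℚ) + (if d = 0 then (p : ℚ) - 1 else -1) := by
  have expand : ∀ k : ZMod p, (1 + cc p (d - k)) * (1 + cc p k)
      = 1 + cc p (d - k) + cc p k + cc p (d - k) * cc p k := by intro k; ring
  rw [Finset.sum_congr rfl (fun k _ => expand k)]
  rw [Finset.sum_add_distrib, Finset.sum_add_distrib, Finset.sum_add_distrib,
    Finset.sum_const, sum_cc hp4, sum_cc_shift hp4, sum_cc_mul hp4,
    Finset.card_univ, ZMod.card]
  simp [nsmul_eq_mul]

include hbin hs

private lemma s_zero' : s 0 = 0 := by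
  rcases hbin 0 with h | h
  · exact h
  · exact absurd ((hs 0).mp h).1 (by simp)

private lemma two_t (x : ZMod p) :
    2 * (s x : ℚ) = 1 + cc p x - (if x = 0 then 1 else 0) := by
  by_cases hx : x = 0
  · subst hx
    rw [s_zero' hbin hs]
    simp [cc_zero]
  · rw [if_neg hx]
    rcases hbin x with h | h
    · have hns : ¬ IsSquare x := fun hsq => by
        have := (hs x).mpr ⟨hx, hsq⟩; omega
      have : quadraticChar (ZMod p) x = -1 :=
        quadraticChar_neg_one_iff_not_isSquare.mpr hns
      rw [h]
      simp [cc, this]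
    · have hsq : IsSquare x := ((hs x).mp h).2
      have : quadraticChar (ZMod p) x = 1 :=
        (quadraticChar_one_iff_isSquare hx).mpr hsq
      rw [h]
      simp only [cc, this]
      norm_num

private lemma key_sum (hp4 : p % 4 = 1) (d : ZMod p) :
    (4:ℚ) * ∑ k : ZMod p, (s (d - k) : ℚ) * (s k : ℚ)
    = if d = 0 then 2 * ((p : ℚ) - 1) else (p : ℚ) - 3 - 2 * cc p d := by
  have ht0 : (s (0 : ZMod p) : ℚ) = 0 := by rw [s_zero' hbin hs]; simp
  have hsub : ∑ k : ZMod p, (s (d - k) : ℚ) * (s k : ℚ)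
      = ∑ k ∈ (Finset.univ.erase (0 : ZMod p)).erase d, (s (d - k) : ℚ) * (s k : ℚ) := by
    refine (Finset.sum_subset (Finset.subset_univ _) ?_).symm
    intro x _ hx
    simp only [Finset.mem_erase, Finset.mem_univ, and_true] at hx
    rcases not_and_or.mp hx with h | h
    · push_neg at h
      subst h
      rw [sub_self, ht0, zero_mul]
    · push_neg at h
      subst h
      rw [ht0, mul_zero]
  have hcongr : ∀ k ∈ (Finset.univ.erase (0 : ZMod p)).erase d,
      (4:ℚ) * ((s (d - k) : ℚ) * (s k : ℚ)) = (1 + cc p (d - k)) * (1 + cc p k) := by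
    intro k hk
    simp only [Finset.mem_erase, Finset.mem_univ, and_true] at hk
    have hk0 : k ≠ 0 := hk.2
    have hkd : d - k ≠ 0 := sub_ne_zero.mpr (Ne.symm hk.1)
    have h1 := two_t hbin hs (d - k)
    have h2 := two_t hbin hs k
    rw [if_neg hkd] at h1
    rw [if_neg hk0] at h2
    rw [sub_zero] at h1 h2
    linear_combination (1 + cc p k) * h1 + (2 * (s (d - k) : ℚ)) * h2
  rw [hsub, Finset.mul_sum, Finset.sum_congr rfl hcongr]
  by_cases hd : d = 0
  · subst hd
    rw [Finset.erase_idem]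
    have := Finset.add_sum_erase Finset.univ
      (fun k => (1 + cc p ((0:ZMod p) - k)) * (1 + cc p k)) (Finset.mem_univ (0 : ZMod p))
    have hg0 : (1 + cc p ((0:ZMod p) - 0)) * (1 + cc p (0:ZMod p)) = 1 := by
      simp [cc_zero]
    have hsg := sum_g hp4 (0 : ZMod p)
    rw [if_pos rfl] at hsg
    rw [if_pos rfl]
    linarith [this, hg0, hsg]
  · rw [if_neg hd]
    have hd0 : d ∈ Finset.univ.erase (0 : ZMod p) := by
      simp [hd]
    have h1 := Finset.add_sum_erase (Finset.univ.erase (0 : ZMod p))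
      (fun k => (1 + cc p (d - k)) * (1 + cc p k)) hd0
    have h2 := Finset.add_sum_erase Finset.univ
      (fun k => (1 + cc p (d - k)) * (1 + cc p k)) (Finset.mem_univ (0 : ZMod p))
    have hgd : (1 + cc p (d - d)) * (1 + cc p d) = 1 + cc p d := by
      rw [sub_self, cc_zero]; ring
    have hg0 : (1 + cc p (d - 0)) * (1 + cc p (0:ZMod p)) = 1 + cc p d := by
      rw [sub_zero, cc_zero]; ring
    have hsg := sum_g hp4 d
    rw [if_neg hd] at hsg
    linarith [h1, h2, hgd, hg0, hsg]

end aux3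

section aux4
variable {p : ℕ} [Fact p.Prime]
  {s : ZMod p → ℤ} (hbin : ∀ i, s i = 0 ∨ s i = 1)
  (hs : ∀ i : ZMod p, s i = 1 ↔ i ≠ 0 ∧ IsSquare i)

private def tq (s : ZMod p → ℤ) : ZMod p → ℚ := fun x => (s x : ℚ)

private def Jq (p : ℕ) : Matrix (ZMod p) (ZMod p) ℚ := Matrix.of fun _ _ => 1

include hbin hs

private lemma sum_tq (hp4 : p % 4 = 1) : ∑ x : ZMod p, tq s x = ((p:ℚ) - 1) / 2 := by
  have h2 : ∑ x : ZMod p, 2 * tq s x = (p:ℚ) - 1 := by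
    have : ∀ x : ZMod p, 2 * tq s x = 1 + cc p x - (if x = 0 then 1 else 0) :=
      fun x => two_t hbin hs x
    rw [Finset.sum_congr rfl (fun x _ => this x)]
    rw [Finset.sum_sub_distrib, Finset.sum_add_distrib, Finset.sum_const, sum_cc hp4,
      Finset.sum_ite_eq' Finset.univ (0 : ZMod p) (fun _ => (1:ℚ)), Finset.card_univ, ZMod.card]
    simp [nsmul_eq_mul]
  rw [← Finset.mul_sum] at h2
  linarith

private lemma m1 (hp4 : p % 4 = 1) :
    circulant (tq s) * circulant (tq s) + circulant (tq s)
    = (((p:ℚ) - 1) / 4) • (1 + Jq p) := by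
  rw [circulant_mul]
  ext i j
  have hmv : (circulant (tq s) *ᵥ tq s) (i - j) = ∑ k, tq s (i - j - k) * tq s k := by
    simp [mulVec, circulant_apply, dotProduct]
  simp only [Matrix.add_apply, circulant_apply, hmv, Matrix.smul_apply,
    Matrix.one_apply, Jq, Matrix.of_apply, smul_eq_mul]
  have hks := key_sum hbin hs hp4 (i - j)
  have htt := two_t hbin hs (i - j)
  by_cases hij : i = j
  · subst hij
    simp only [sub_self, if_pos rfl] at hks htt ⊢
    have ht0 : tq s 0 = (s (0:ZMod p) : ℚ) := rfl
    rw [show (∑ k, tq s (0 - k) * tq s k) = ∑ k : ZMod p, (s ((0:ZMod p) - k) : ℚ) * (s k : ℚ) from rfl]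
    have hcc0 : cc p (0 : ZMod p) = 0 := cc_zero
    rw [hcc0] at htt
    norm_num at hks htt ⊢
    unfold tq
    have h0 : (s (0:ZMod p) : ℚ) = 0 := by exact_mod_cast htt
    linarith
  · have hd : i - j ≠ 0 := sub_ne_zero.mpr hij
    rw [if_neg hd] at hks htt
    rw [if_neg hij]
    rw [show (∑ k, tq s (i - j - k) * tq s k) = ∑ k : ZMod p, (s (i - j - k) : ℚ) * (s k : ℚ) from rfl]
    rw [sub_zero] at htt
    unfold tq
    linarith

private lemma m2a (hp4 : p % 4 = 1) :
    circulant (tq s) * Jq p = (((p:ℚ) - 1) / 2) • Jq p := by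
  ext i j
  simp only [Matrix.mul_apply, Jq, Matrix.of_apply, circulant_apply, mul_one,
    Matrix.smul_apply, smul_eq_mul]
  rw [show (∑ k, tq s (i - k)) = ∑ x : ZMod p, tq s x from
    Fintype.sum_equiv (Equiv.subLeft i) _ _ (fun k => rfl), sum_tq hbin hs hp4]

private lemma m2b (hp4 : p % 4 = 1) :
    Jq p * circulant (tq s) = (((p:ℚ) - 1) / 2) • Jq p := by
  ext i j
  simp only [Matrix.mul_apply, Jq, Matrix.of_apply, circulant_apply, one_mul,
    Matrix.smul_apply, smul_eq_mul]
  rw [show (∑ k, tq s (k - j)) = ∑ x : ZMod p, tq s x from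
    Fintype.sum_equiv (Equiv.subRight j) _ _ (fun k => rfl), sum_tq hbin hs hp4, mul_one]

omit hbin hs in
private lemma m2c : Jq p * Jq p = (p : ℚ) • Jq p := by
  ext i j
  simp [Jq, Matrix.mul_apply, Finset.card_univ, ZMod.card]

end aux4

section aux5
variable {p : ℕ} [Fact p.Prime]
  {s : ZMod p → ℤ} (hbin : ∀ i, s i = 0 ∨ s i = 1)
  (hs : ∀ i : ZMod p, s i = 1 ↔ i ≠ 0 ∧ IsSquare i)

include hbin hs

private lemma m3 (hp4 : p % 4 = 1) :
    (circulant (tq s)).det = (Jq p - 1 - circulant (tq s)).det := by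
  have h2 : ringChar (ZMod p) ≠ 2 := char2 p hp4
  obtain ⟨g, hg⟩ := FiniteField.exists_nonsquare h2
  have hg0 : g ≠ 0 := fun h => hg (h ▸ (IsSquare.zero : IsSquare (0 : ZMod p)))
  have hχg : quadraticChar (ZMod p) g = -1 := quadraticChar_neg_one_iff_not_isSquare.mpr hg
  set e : Equiv.Perm (ZMod p) := Equiv.mulLeft₀ g hg0 with he
  have hsub : (circulant (tq s)).submatrix e e = circulant (fun x => tq s (g * x)) := by
    ext i j
    simp only [Matrix.submatrix_apply, circulant_apply, he]
    have : ∀ y : ZMod p, (Equiv.mulLeft₀ g hg0) y = g * y := fun y => rfl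
    rw [this, this]
    congr 1
    ring
  have hfun : (fun x : ZMod p => tq s (g * x))
      = fun x => 1 - (if x = 0 then 1 else 0) - tq s x := by
    funext x
    by_cases hx : x = 0
    · subst hx
      rw [mul_zero, if_pos rfl]
      have h0 : tq s 0 = 0 := by
        unfold tq; rw [s_zero' hbin hs]; simp
      rw [h0]
      norm_num
    · rw [if_neg hx]
      have hgx0 : g * x ≠ 0 := mul_ne_zero hg0 hx
      rcases hbin x with h | h
      · -- s x = 0, so x is a nonsquare, g*x is a square
        have hns : ¬ IsSquare x := by
          intro hsq
          have := (hs x).mpr ⟨hx, hsq⟩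
          omega
        have hχx : quadraticChar (ZMod p) x = -1 :=
          quadraticChar_neg_one_iff_not_isSquare.mpr hns
        have hsq : IsSquare (g * x) := by
          rw [← quadraticChar_one_iff_isSquare hgx0, _root_.map_mul, hχg, hχx]
          norm_num
        have : s (g * x) = 1 := (hs _).mpr ⟨hgx0, hsq⟩
        unfold tq
        rw [this, h]
        norm_num
      · -- s x = 1, so x is a square, g*x is a nonsquare
        have hsqx : IsSquare x := ((hs x).mp h).2
        have hχx : quadraticChar (ZMod p) x = 1 :=
          (quadraticChar_one_iff_isSquare hx).mpr hsqx
        have hns : ¬ IsSquare (g * x) := by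
          rw [← quadraticChar_neg_one_iff_not_isSquare, _root_.map_mul, hχg, hχx]
          norm_num
        have h0 : s (g * x) = 0 := by
          rcases hbin (g * x) with h' | h'
          · exact h'
          · exact absurd ((hs _).mp h').2 hns
        unfold tq
        rw [h0, h]
        norm_num
  have hcirc : circulant (fun x : ZMod p => 1 - (if x = 0 then 1 else 0) - tq s x)
      = Jq p - 1 - circulant (tq s) := by
    ext i j
    simp only [circulant_apply, Matrix.sub_apply, Jq, Matrix.of_apply, Matrix.one_apply]
    congr 2
    by_cases hij : i = j
    · subst hij; simp
    · rw [if_neg (sub_ne_zero.mpr hij), if_neg hij]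
  rw [← Matrix.det_submatrix_equiv_self e, hsub, hfun, hcirc]

end aux5

section aux6
variable {p : ℕ} [Fact p.Prime]
  {s : ZMod p → ℤ} (hbin : ∀ i, s i = 0 ∨ s i = 1)
  (hs : ∀ i : ZMod p, s i = 1 ↔ i ≠ 0 ∧ IsSquare i)

include hbin hs

private lemma m0 (hp4 : p % 4 = 1) :
    circulant (tq s) * (circulant (tq s) + 1) = (((p:ℚ) - 1) / 4) • (1 + Jq p) := by
  rw [Matrix.mul_add, Matrix.mul_one]
  exact m1 hbin hs hp4

private lemma m4 (hp4 : p % 4 = 1) :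
    (Jq p - 1 - circulant (tq s)) * (Jq p - circulant (tq s))
    = (((p:ℚ) - 1) / 4) • (1 + Jq p) := by
  have hA2 : circulant (tq s) * circulant (tq s)
      = (((p:ℚ) - 1) / 4) • (1 + Jq p) - circulant (tq s) :=
    eq_sub_of_add_eq (m1 hbin hs hp4)
  rw [Matrix.sub_mul, Matrix.sub_mul, Matrix.mul_sub, Matrix.mul_sub, Matrix.mul_sub,
    Matrix.one_mul, Matrix.one_mul, m2c, m2b hbin hs hp4, m2a hbin hs hp4, hA2]
  module

private lemma m5 (hp4 : p % 4 = 1) :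
    (Jq p - circulant (tq s)) * (circulant (tq s) + 1)
    = (((p:ℚ) + 3) / 4) • Jq p + (-(((p:ℚ) - 1) / 4)) • 1 := by
  have hA2 : circulant (tq s) * circulant (tq s)
      = (((p:ℚ) - 1) / 4) • (1 + Jq p) - circulant (tq s) :=
    eq_sub_of_add_eq (m1 hbin hs hp4)
  rw [Matrix.mul_add, Matrix.mul_one, Matrix.sub_mul, m2b hbin hs hp4, hA2]
  module

end aux6

section aux7
variable {p : ℕ} [Fact p.Prime]

private lemma detJ1 : ((1 : Matrix (ZMod p) (ZMod p) ℚ) + Jq p).det = (p : ℚ) + 1 := by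
  have hJ : Jq p = Matrix.replicateCol (Fin 1) (fun _ => (1:ℚ)) * Matrix.replicateRow (Fin 1) (fun _ => (1:ℚ)) := by
    ext i j
    simp [Jq, Matrix.mul_apply, Matrix.replicateCol, Matrix.replicateRow]
  rw [hJ]
  erw [Matrix.det_one_add_replicateCol_mul_replicateRow]
  simp [dotProduct, Finset.card_univ, ZMod.card, add_comm]

private lemma detaIbJ (a b : ℚ) (ha : a ≠ 0) :
    (a • (1 : Matrix (ZMod p) (ZMod p) ℚ) + b • Jq p).det = a ^ (p - 1) * (a + p * b) := by
  have hsm : a • (1 : Matrix (ZMod p) (ZMod p) ℚ) + b • Jq p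
      = a • ((1 : Matrix (ZMod p) (ZMod p) ℚ) + (b/a) • Jq p) := by
    rw [smul_add, smul_smul]
    congr 2
    field_simp
  have hJ : (b/a) • Jq p
      = Matrix.replicateCol (Fin 1) (fun _ => (b/a : ℚ)) * Matrix.replicateRow (Fin 1) (fun _ => (1:ℚ)) := by
    ext i j
    simp [Jq, Matrix.mul_apply, Matrix.replicateCol, Matrix.replicateRow]
  rw [hsm, Matrix.det_smul, hJ]
  erw [Matrix.det_one_add_replicateCol_mul_replicateRow]
  rw [ZMod.card]
  have hp1 : p = (p - 1) + 1 := (Nat.succ_pred_eq_of_pos (Fact.out : p.Prime).pos).symm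
  have hpow : a ^ p = a ^ (p - 1) * a := by
    conv_lhs => rw [hp1]
    rw [pow_succ]
  rw [hpow]
  simp only [dotProduct, one_mul, Finset.sum_const, Finset.card_univ, ZMod.card, nsmul_eq_mul]
  field_simp
end aux7

theorem stmt11 (p : ℕ) (hp : p.Prime) (hp4 : p % 4 = 1) [NeZero p]
    (s : ZMod p → ℤ) (hbin : ∀ i, s i = 0 ∨ s i = 1)
    (hs : ∀ i : ZMod p, s i = 1 ↔ i ≠ 0 ∧ IsSquare i) :
    (Matrix.circulant s).det =
        (((p - 1) / 2 : ℕ) : ℤ) * (((p - 1) / 4 : ℕ) : ℤ) ^ ((p - 1) / 2) ∨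
    (Matrix.circulant s).det =
        -((((p - 1) / 2 : ℕ) : ℤ) * (((p - 1) / 4 : ℕ) : ℤ) ^ ((p - 1) / 2)) := by
  haveI : Fact p.Prime := ⟨hp⟩
  have hp5 : 5 ≤ p := by
    have h2 := hp.two_le
    rcases Nat.lt_or_ge p 5 with h | h
    · interval_cases p <;> omega
    · exact h
  set m : ℕ := (p - 1) / 4 with hm
  have hpm : p = 4 * m + 1 := by omega
  set A := circulant (tq s) with hA
  set q : ℚ := (p : ℚ) with hq
  set c4 : ℚ := (q - 1) / 4 with hc4def
  have hq5 : (5:ℚ) ≤ q := by rw [hq]; exact_mod_cast hp5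
  have hc4 : c4 ≠ 0 := by rw [hc4def]; intro h; nlinarith
  have hq1 : q + 1 ≠ 0 := by intro h; nlinarith
  have hDE : A.det * (A + 1).det = c4 ^ p * (q + 1) := by
    rw [← Matrix.det_mul, m0 hbin hs hp4, Matrix.det_smul, ZMod.card, detJ1]
  have hA'1 : (Jq p - 1 - A).det = A.det := (m3 hbin hs hp4).symm
  have hDF : A.det * (Jq p - A).det = c4 ^ p * (q + 1) := by
    rw [← hA'1, ← Matrix.det_mul, m4 hbin hs hp4, Matrix.det_smul, ZMod.card, detJ1]
  have hrhs0 : c4 ^ p * (q + 1) ≠ 0 := mul_ne_zero (pow_ne_zero _ hc4) hq1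
  have hD0 : A.det ≠ 0 := by
    intro h
    rw [h, zero_mul] at hDE
    exact hrhs0 hDE.symm
  have hE0 : (A + 1).det ≠ 0 := by
    intro h
    rw [h, mul_zero] at hDE
    exact hrhs0 hDE.symm
  have hFE : (Jq p - A).det = (A + 1).det := mul_left_cancel₀ hD0 (hDF.trans hDE.symm)
  have hpev : Even (p - 1) := ⟨(p - 1) / 2, by omega⟩
  have hFdet : (Jq p - A).det * (A + 1).det = c4 ^ (p - 1) * ((q + 1) ^ 2 / 4) := by
    rw [← Matrix.det_mul, m5 hbin hs hp4, add_comm, detaIbJ _ _ (neg_ne_zero.mpr hc4)]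
    rw [hpev.neg_pow]
    rw [hc4def]
    ring
  rw [hFE] at hFdet
  have hE2 : (A + 1).det ^ 2 = c4 ^ (p - 1) * ((q + 1) ^ 2 / 4) := by
    rw [pow_two]; exact hFdet
  have hD2 : A.det ^ 2 = 4 * c4 ^ (p + 1) := by
    have h1 : A.det ^ 2 * (A + 1).det ^ 2 = (c4 ^ p * (q + 1)) ^ 2 := by
      rw [← mul_pow, hDE]
    rw [hE2] at h1
    have hne : c4 ^ (p - 1) * ((q + 1) ^ 2 / 4) ≠ 0 := by
      apply mul_ne_zero (pow_ne_zero _ hc4)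
      intro h
      have : q + 1 = 0 := by
        have := pow_eq_zero_iff (n := 2) (by norm_num) |>.mp (by linarith [h] : (q+1)^2 = 0)
        exact this
      exact hq1 this
    refine mul_right_cancel₀ hne ?_
    rw [h1]
    have hsplit : (c4 ^ p * (q + 1)) ^ 2 = c4 ^ (2 * p) * (q + 1) ^ 2 := by
      rw [mul_pow, ← pow_mul, mul_comm p 2]
    have hcomb : 4 * c4 ^ (p + 1) * (c4 ^ (p - 1) * ((q + 1) ^ 2 / 4))
        = c4 ^ ((p + 1) + (p - 1)) * (q + 1) ^ 2 := by
      rw [pow_add]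
      ring
    rw [hsplit, hcomb, show (p + 1) + (p - 1) = 2 * p by omega]
  have hc4m : c4 = (m : ℚ) := by
    rw [hc4def, hq, hpm]
    push_cast
    ring
  rw [hc4m, show p + 1 = 4 * m + 2 by omega] at hD2
  have hcast : ((Matrix.circulant s).det : ℚ) = A.det := by
    rw [show ((Matrix.circulant s).det : ℚ) = (Int.castRingHom ℚ) (Matrix.circulant s).det from rfl,
      RingHom.map_det, RingHom.mapMatrix_apply, Matrix.map_circulant]
    rfl
  set X : ℤ := ((2 * m : ℕ) : ℤ) * ((m : ℕ) : ℤ) ^ (2 * m) with hX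
  have hX2 : ((X : ℤ) : ℚ) ^ 2 = 4 * (m : ℚ) ^ (4 * m + 2) := by
    rw [hX]
    push_cast
    rw [mul_pow, ← pow_mul]
    ring
  have hZQ : (((Matrix.circulant s).det - X) * ((Matrix.circulant s).det + X) : ℚ) = 0 := by
    have : ((Matrix.circulant s).det : ℚ) ^ 2 - ((X : ℤ) : ℚ) ^ 2 = 0 := by
      rw [hcast, hD2, hX2]
      ring
    nlinarith [this]
  have hZ : ((Matrix.circulant s).det - X) * ((Matrix.circulant s).det + X) = 0 := by
    exact_mod_cast hZQ
  have htarget : (((p - 1) / 2 : ℕ) : ℤ) * (((p - 1) / 4 : ℕ) : ℤ) ^ ((p - 1) / 2) = X := by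
    rw [hX, show (p - 1) / 2 = 2 * m by omega, hm]
  rcases mul_eq_zero.mp hZ with h | h
  · left
    rw [htarget]
    linarith [h]
  · right
    rw [htarget]
    linarith [h]
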